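/- Let r be a prime and m ≥ 2 an integer with (m, r) ≠ (2, 2). Then the affine general linear group AGL_m(r), i.e. the group of all invertible affine transformations x ↦ A·x + b (A ∈ GL_m(F_r), b ∈ F_r^m) of the space F_r^m, contains no element of order r^m. -/

import Mathlib

lemma aux_pow_bound : ∀ k : ℕ, k + 4 ≤ 2 ^ (k + 2) := by
  intro k
  induction k with
  | zero => norm_num
  | succ n ih =>
    have h2 : 2 ^ (n + 1 + 2) = 2 * 2 ^ (n + 2) := by ring
    have h1 : 1 ≤ 2 ^ (n + 2) := Nat.one_le_two_pow
    omega

/-- Lemma 6.6 of Katz–Tiep, "Rigid local systems and finite general linear groups":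
for a prime `r` and `m ≥ 2` with `(m, r) ≠ (2, 2)`, the affine general linear group
`AGL_m(r)` (the group of invertible affine transformations of `F_r^m`, i.e. affine
self-equivalences of the `F_r`-vector space `F_r^m`) has no element of order `r^m`. -/
theorem stmt_9 (r m : ℕ) (hr : r.Prime) (hm : 2 ≤ m) (hmr : ¬(m = 2 ∧ r = 2)) :
    ∀ g : (Fin m → ZMod r) ≃ᵃ[ZMod r] (Fin m → ZMod r), orderOf g ≠ r ^ m := by
  intro g hord
  haveI := Fact.mk hr
  have hr2 := hr.two_le
  set V := Fin m → ZMod r with hV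
  -- arithmetic bound
  have harith : m + 1 ≤ r ^ (m - 1) := by
    rcases eq_or_lt_of_le hm with h2 | h3
    · -- m = 2, r ≥ 3
      have hr3 : 3 ≤ r := by
        rcases Nat.lt_or_ge r 3 with h | h
        · interval_cases r <;> simp_all <;> omega
        · exact h
      rw [← h2]
      simpa using hr3
    · -- m ≥ 3
      have h1 : m + 1 ≤ 2 ^ (m - 1) := by
        obtain ⟨k, rfl⟩ : ∃ k, m = k + 3 := ⟨m - 3, by omega⟩
        have h := aux_pow_bound k
        have e : k + 3 - 1 = k + 2 := by omega
        rw [e]; omega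
      exact le_trans h1 (Nat.pow_le_pow_left hr2 _)
  set N := r ^ (m - 1) with hN
  let A : Module.End (ZMod r) V := (g.linear : V →ₗ[ZMod r] V)
  have hgy : ∀ y : V, g y = A y + g 0 := by
    intro y
    simpa [A] using g.map_vadd 0 y
  have hiter : ∀ (n : ℕ) (x : V), (g ^ n) x = (A ^ n) x + (∑ i ∈ Finset.range n, A ^ i) (g 0) := by
    intro n
    induction n with
    | zero => simp
    | succ n ih =>
      intro x
      rw [pow_succ']
      have : (g * g ^ n) x = g ((g ^ n) x) := rfl
      rw [this, ih, hgy, Finset.sum_range_succ']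
      simp only [map_add, map_sum, LinearMap.add_apply, LinearMap.sum_apply, pow_zero,
        Module.End.one_apply]
      simp only [← Module.End.mul_apply, ← pow_succ, ← pow_succ']
      abel
  -- g ^ (r ^ m) = 1
  have hg1 : g ^ (r ^ m) = 1 := by rw [← hord]; exact pow_orderOf_eq_one g
  -- consequences at points
  have hpt : ∀ x : V, (A ^ (r ^ m)) x + (∑ i ∈ Finset.range (r ^ m), A ^ i) (g 0) = x := by
    intro x
    rw [← hiter, hg1]; rfl
  have hS0 : (∑ i ∈ Finset.range (r ^ m), A ^ i) (g 0) = 0 := by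
    have := hpt 0
    simpa using this
  have hArm : A ^ (r ^ m) = 1 := by
    refine LinearMap.ext fun x => ?_
    have := hpt x
    rw [hS0, add_zero] at this
    simpa using this
  -- polynomial identities
  have hXne : (Polynomial.X - 1 : Polynomial (ZMod r)) ≠ 0 := by
    intro h
    have := congrArg (Polynomial.eval 0) h
    simp at this
  have hpolyid : ∀ k : ℕ, (Polynomial.X - 1 : Polynomial (ZMod r)) ^ (r ^ k)
      = Polynomial.X ^ (r ^ k) - 1 := by
    intro k
    simpa using sub_pow_char_pow (R := Polynomial (ZMod r)) (p := r) (n := k) (x := Polynomial.X) (y := 1)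
  have hgeom : (∑ i ∈ Finset.range N, (Polynomial.X : Polynomial (ZMod r)) ^ i)
      = (Polynomial.X - 1) ^ (N - 1) := by
    have h1 : (∑ i ∈ Finset.range N, (Polynomial.X : Polynomial (ZMod r)) ^ i)
        * (Polynomial.X - 1) = (Polynomial.X - 1) ^ (N - 1) * (Polynomial.X - 1) := by
      rw [geom_sum_mul, ← pow_succ]
      have hN1 : N - 1 + 1 = N := by
        have : 0 < N := Nat.pow_pos (by omega)
        omega
      rw [hN1, hN, hpolyid]
    exact mul_right_cancel₀ hXne h1
  -- transfer to A via aeval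
  have hsumA : (∑ i ∈ Finset.range N, A ^ i) = (A - 1) ^ (N - 1) := by
    have := congrArg (Polynomial.aeval A) hgeom
    simpa using this
  have hpowA : ∀ k : ℕ, (A - 1) ^ (r ^ k) = A ^ (r ^ k) - 1 := by
    intro k
    have := congrArg (Polynomial.aeval A) (hpolyid k)
    simpa using this
  -- nilpotency
  have hnil : IsNilpotent (A - 1) := ⟨r ^ m, by rw [hpowA, hArm, sub_self]⟩
  have hnilm : (A - 1) ^ m = 0 := by
    have hchar := hnil.charpoly_eq_X_pow_finrank
    have haev := LinearMap.aeval_self_charpoly (A - 1)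
    rw [hchar] at haev
    have hfr : Module.finrank (ZMod r) V = m := Module.finrank_fin_fun (ZMod r)
    rw [hfr] at haev
    simpa using haev
  have hpow0 : ∀ k, m ≤ k → (A - 1) ^ k = 0 := by
    intro k hk
    rw [← Nat.sub_add_cancel hk, pow_add, hnilm, mul_zero]
  -- g ^ N = 1
  have hAN : A ^ N = 1 := by
    have h := hpowA (m - 1)
    rw [← hN] at h
    have : A ^ N - 1 = 0 := by rw [← h]; exact hpow0 _ (by omega)
    linear_combination (norm := module) this
  have hSN : (∑ i ∈ Finset.range N, A ^ i) = 0 := by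
    rw [hsumA]; exact hpow0 _ (by omega)
  have hgN : g ^ N = 1 := by
    ext x
    rw [hiter, hAN, hSN]
    simp
  have hdvd : orderOf g ∣ N := orderOf_dvd_of_pow_eq_one hgN
  rw [hord] at hdvd
  have hNpos : 0 < N := Nat.pow_pos (by omega)
  have hle : r ^ m ≤ N := Nat.le_of_dvd hNpos hdvd
  have hlt : N < r ^ m := Nat.pow_lt_pow_right hr.one_lt (by omega)
  omega
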